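/- For every n ≥ 0, ε > 0, σ > 0 and u ∈ ℝ: ∫_ℝ p_ε(σ v - u) H_n(v) p_1(v) dv = (σ/√(σ²+ε))^n H_n(u/√(σ²+ε)) p_{σ²+ε}(u), where H_n is the n-th (probabilists') Hermite polynomial H_n(x) = (-1)^n e^{x²/2} (d/dx)^n e^{-x²/2} and p_s(x) = (2πs)^{-1/2} e^{-x²/(2s)}. -/

import Mathlib

open MeasureTheory

/-- The Gaussian heat kernel `p_s(x) = (2πs)^{-1/2} exp(-x²/(2s))`. -/
noncomputable def heatK (s x : ℝ) : ℝ :=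
  (Real.sqrt (2 * Real.pi * s))⁻¹ * Real.exp (-x ^ 2 / (2 * s))

open Polynomial Filter


-- step 1: integrability of x^n * gaussian
lemma aux_integrable_pow_gaussian (n : ℕ) {b : ℝ} (hb : 0 < b) :
    Integrable (fun x : ℝ => x ^ n * Real.exp (-b * x ^ 2)) := by
  have hg : Integrable (fun x : ℝ =>
      ((n.factorial : ℝ) * Real.exp (1 / (2 * b))) * Real.exp (-(b / 2) * x ^ 2)) :=
    (integrable_exp_neg_mul_sq (half_pos hb)).const_mul _
  refine hg.mono' (Continuous.aestronglyMeasurable (by fun_prop)) ?_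
  filter_upwards with x
  have hfac : (0:ℝ) < n.factorial := by positivity
  have h1 : |x| ^ n ≤ (n.factorial : ℝ) * Real.exp |x| := by
    have h := Real.pow_div_factorial_le_exp (x := |x|) (abs_nonneg x) n
    rw [div_le_iff₀ hfac] at h
    linarith [h]
  have h2 : |x| - b * x ^ 2 ≤ 1 / (2 * b) - b / 2 * x ^ 2 := by
    have h4 : x ^ 2 = |x| ^ 2 := (sq_abs x).symm
    have key : 1 / (2*b) - b/2 * |x|^2 - (|x| - b * |x|^2) = (b*|x| - 1)^2/(2*b) := by
      field_simp
      ring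
    rw [h4]
    linarith [key, div_nonneg (sq_nonneg (b*|x|-1)) (le_of_lt (by positivity : (0:ℝ) < 2*b))]
  calc ‖x ^ n * Real.exp (-b * x ^ 2)‖
      = |x| ^ n * Real.exp (-b * x ^ 2) := by
        rw [norm_mul, norm_pow, Real.norm_eq_abs, Real.norm_eq_abs, Real.abs_exp]
    _ ≤ ((n.factorial : ℝ) * Real.exp |x|) * Real.exp (-b * x ^ 2) := by
        gcongr
    _ = (n.factorial : ℝ) * Real.exp (|x| - b * x ^ 2) := by
        rw [mul_assoc, ← Real.exp_add, sub_eq_add_neg, neg_mul]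
    _ ≤ (n.factorial : ℝ) * Real.exp (1 / (2 * b) - b / 2 * x ^ 2) := by
        gcongr
    _ = (n.factorial : ℝ) * Real.exp (1 / (2 * b)) * Real.exp (-(b / 2) * x ^ 2) := by
        rw [mul_assoc, ← Real.exp_add, sub_eq_add_neg, neg_mul]

lemma aux_integrable_poly_gaussian (P : Polynomial ℝ) {b : ℝ} (hb : 0 < b) :
    Integrable (fun x : ℝ => P.eval x * Real.exp (-b * x ^ 2)) := by
  have h : ∀ x : ℝ, P.eval x * Real.exp (-b * x ^ 2)
      = ∑ i ∈ Finset.range (P.natDegree + 1), P.coeff i * (x ^ i * Real.exp (-b * x ^ 2)) := by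
    intro x
    rw [Polynomial.eval_eq_sum_range, Finset.sum_mul]
    simp [mul_assoc]
  rw [funext h]
  exact integrable_finset_sum _ fun i _ => (aux_integrable_pow_gaussian i hb).const_mul _

lemma aux_integrable_poly_heatK (P : Polynomial ℝ) {s : ℝ} (hs : 0 < s) (m : ℝ) :
    Integrable (fun v : ℝ => P.eval v * heatK s (v - m)) := by
  have hb : 0 < (2 * s)⁻¹ := by positivity
  have h1 : Integrable (fun w : ℝ => (Real.sqrt (2 * Real.pi * s))⁻¹ *
      ((P.comp (X + C m)).eval w * Real.exp (-(2 * s)⁻¹ * w ^ 2))) :=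
    ((aux_integrable_poly_gaussian _ hb).const_mul _)
  have h2 := h1.comp_sub_right m
  refine h2.congr (Filter.Eventually.of_forall fun v => ?_)
  simp only [heatK, Polynomial.eval_comp, Polynomial.eval_add, Polynomial.eval_X,
    Polynomial.eval_C, sub_add_cancel]
  ring_nf

lemma aux_tendsto_poly_gaussian (P : Polynomial ℝ) {b : ℝ} (hb : 0 < b) :
    Tendsto (fun x : ℝ => P.eval x * Real.exp (-b * x ^ 2)) (cocompact ℝ) (nhds 0) := by
  have h : ∀ x : ℝ, P.eval x * Real.exp (-b * x ^ 2)
      = ∑ i ∈ Finset.range (P.natDegree + 1), P.coeff i * (x ^ i * Real.exp (-b * x ^ 2)) := by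
    intro x
    rw [Polynomial.eval_eq_sum_range, Finset.sum_mul]
    simp [mul_assoc]
  rw [funext h]
  have : (0 : ℝ) = ∑ i ∈ Finset.range (P.natDegree + 1), (0 : ℝ) := by simp
  rw [this]
  refine tendsto_finset_sum _ fun i _ => ?_
  rw [show (0:ℝ) = P.coeff i * 0 by simp]
  refine Tendsto.const_mul _ ?_
  have habs := tendsto_rpow_abs_mul_exp_neg_mul_sq_cocompact hb (i : ℝ)
  rw [tendsto_zero_iff_norm_tendsto_zero]
  refine squeeze_zero (fun x => norm_nonneg _) (fun x => ?_) habs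
  rw [norm_mul, norm_pow, Real.norm_eq_abs, Real.norm_eq_abs, Real.abs_exp,
    ← Real.rpow_natCast |x| i]

lemma aux_tendsto_poly_heatK (P : Polynomial ℝ) {s : ℝ} (hs : 0 < s) (m : ℝ) :
    Tendsto (fun v : ℝ => P.eval v * heatK s (v - m)) (cocompact ℝ) (nhds 0) := by
  have hb : 0 < (2 * s)⁻¹ := by positivity
  have h1 : Tendsto (fun w : ℝ => (Real.sqrt (2 * Real.pi * s))⁻¹ *
      ((P.comp (X + C m)).eval w * Real.exp (-(2 * s)⁻¹ * w ^ 2))) (cocompact ℝ) (nhds 0) := by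
    rw [show (0:ℝ) = (Real.sqrt (2 * Real.pi * s))⁻¹ * 0 by simp]
    exact (aux_tendsto_poly_gaussian _ hb).const_mul _
  have hsub : Tendsto (fun v : ℝ => v - m) (cocompact ℝ) (cocompact ℝ) :=
    (Homeomorph.subRight m).toCocompactMap.cocompact_tendsto'
  have h2 := h1.comp hsub
  refine h2.congr fun v => ?_
  simp only [Function.comp_apply, heatK, Polynomial.eval_comp, Polynomial.eval_add,
    Polynomial.eval_X, Polynomial.eval_C, sub_add_cancel]
  ring_nf


lemma aux_hasDerivAt (Q : Polynomial ℝ) {s : ℝ} (hs : 0 < s) (m v : ℝ) :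
    HasDerivAt (fun v : ℝ => Q.eval v * heatK s (v - m))
      ((Q.derivative.eval v - Q.eval v * ((v - m) / s)) * heatK s (v - m)) v := by
  have hg : HasDerivAt (fun v : ℝ => -(v - m) ^ 2 / (2 * s)) (-(v - m) / s) v := by
    have h1 : HasDerivAt (fun v : ℝ => v - m) 1 v := (hasDerivAt_id v).sub_const m
    have h3 := ((h1.pow 2).neg).div_const (2 * s)
    refine h3.congr_deriv ?_
    field_simp
    ring
  have hexp := (hg.exp).const_mul (Real.sqrt (2 * Real.pi * s))⁻¹
  have hp := Q.hasDerivAt v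
  have hmul := hp.mul hexp
  refine hmul.congr_deriv ?_
  simp only [heatK]
  ring

lemma aux_IBP (Q : Polynomial ℝ) {s : ℝ} (hs : 0 < s) (m : ℝ) :
    ∫ v : ℝ, (Q.derivative.eval v - Q.eval v * ((v - m) / s)) * heatK s (v - m) = 0 := by
  have hR : (fun v : ℝ => (Q.derivative.eval v - Q.eval v * ((v - m) / s)) * heatK s (v - m))
      = fun v : ℝ => (Q.derivative - Polynomial.C s⁻¹ * ((X - C m) * Q)).eval v * heatK s (v - m) := by
    funext v
    simp only [Polynomial.eval_sub, Polynomial.eval_mul, Polynomial.eval_C, Polynomial.eval_X]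
    congr 1
    field_simp
  have hFint : Integrable (fun v : ℝ =>
      (Q.derivative.eval v - Q.eval v * ((v - m) / s)) * heatK s (v - m)) := by
    rw [hR]; exact aux_integrable_poly_heatK _ hs m
  have hderiv := fun v : ℝ => aux_hasDerivAt Q hs m v
  have htend := aux_tendsto_poly_heatK Q hs m
  rw [cocompact_eq_atBot_atTop] at htend
  have htop := htend.mono_left le_sup_right
  have hbot := htend.mono_left le_sup_left
  have hIic := integral_Iic_of_hasDerivAt_of_tendsto' (a := 0)
    (fun x _ => hderiv x) hFint.integrableOn hbot
  have hIoi := integral_Ioi_of_hasDerivAt_of_tendsto' (a := 0)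
    (fun x _ => hderiv x) hFint.integrableOn htop
  rw [← intervalIntegral.integral_Iic_add_Ioi hFint.integrableOn hFint.integrableOn, hIic, hIoi]
  ring

lemma aux_integral_heatK {s : ℝ} (hs : 0 < s) (m : ℝ) :
    ∫ v : ℝ, heatK s (v - m) = 1 := by
  rw [integral_sub_right_eq_self (μ := volume) (fun v => heatK s v) m]
  simp only [heatK]
  rw [integral_const_mul _ _]
  have h : ∀ x : ℝ, Real.exp (-x ^ 2 / (2 * s)) = Real.exp (-(2 * s)⁻¹ * x ^ 2) := by
    intro x; ring_nf
  rw [funext h, integral_gaussian,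
    show Real.pi / (2 * s)⁻¹ = 2 * Real.pi * s by field_simp]
  exact inv_mul_cancel₀ (ne_of_gt (Real.sqrt_pos.mpr (by positivity)))

lemma aux_J_add (P Q : Polynomial ℝ) {s : ℝ} (hs : 0 < s) (m : ℝ) :
    ∫ v : ℝ, (P + Q).eval v * heatK s (v - m)
      = (∫ v : ℝ, P.eval v * heatK s (v - m)) + ∫ v : ℝ, Q.eval v * heatK s (v - m) := by
  rw [← integral_add (aux_integrable_poly_heatK P hs m) (aux_integrable_poly_heatK Q hs m)]
  congr 1; funext v; simp [Polynomial.eval_add]; ring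

lemma aux_J_sub (P Q : Polynomial ℝ) {s : ℝ} (hs : 0 < s) (m : ℝ) :
    ∫ v : ℝ, (P - Q).eval v * heatK s (v - m)
      = (∫ v : ℝ, P.eval v * heatK s (v - m)) - ∫ v : ℝ, Q.eval v * heatK s (v - m) := by
  rw [← integral_sub (aux_integrable_poly_heatK P hs m) (aux_integrable_poly_heatK Q hs m)]
  congr 1; funext v; simp [Polynomial.eval_sub]; ring

lemma aux_J_Cmul (a : ℝ) (P : Polynomial ℝ) {s : ℝ} (hs : 0 < s) (m : ℝ) :
    ∫ v : ℝ, (Polynomial.C a * P).eval v * heatK s (v - m)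
      = a * ∫ v : ℝ, P.eval v * heatK s (v - m) := by
  rw [← integral_const_mul]
  congr 1; funext v; simp [Polynomial.eval_mul]; ring

lemma aux_J_ibp (Q : Polynomial ℝ) {s : ℝ} (hs : 0 < s) (m : ℝ) :
    ∫ v : ℝ, ((X - C m) * Q).eval v * heatK s (v - m)
      = s * ∫ v : ℝ, (Polynomial.derivative Q).eval v * heatK s (v - m) := by
  have h0 := aux_IBP Q hs m
  have h1 : ∫ v : ℝ, (Q.derivative.eval v - Q.eval v * ((v - m) / s)) * heatK s (v - m)
      = (∫ v : ℝ, Q.derivative.eval v * heatK s (v - m))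
        - s⁻¹ * ∫ v : ℝ, ((X - C m) * Q).eval v * heatK s (v - m) := by
    rw [← integral_const_mul, ← integral_sub (aux_integrable_poly_heatK _ hs m)
      ((aux_integrable_poly_heatK _ hs m).const_mul s⁻¹)]
    congr 1; funext v
    simp only [Polynomial.eval_mul, Polynomial.eval_sub, Polynomial.eval_X, Polynomial.eval_C]
    field_simp
  rw [h1] at h0
  have hs' : s ≠ 0 := ne_of_gt hs
  simp only [Polynomial.eval_mul, Polynomial.eval_sub, Polynomial.eval_X, Polynomial.eval_C]
  simp only [Polynomial.eval_mul, Polynomial.eval_sub, Polynomial.eval_X, Polynomial.eval_C] at h0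
  field_simp at h0
  linarith

noncomputable def Hp (n : ℕ) : Polynomial ℝ := (Polynomial.hermite n).map (Int.castRingHom ℝ)

lemma Hp_zero : Hp 0 = 1 := by simp [Hp, Polynomial.hermite_zero]

lemma Hp_succ (n : ℕ) : Hp (n + 1) = X * Hp n - Polynomial.derivative (Hp n) := by
  simp only [Hp, Polynomial.hermite_succ, Polynomial.map_sub, Polynomial.map_mul,
    Polynomial.map_X, Polynomial.derivative_map]

lemma Hp_one : Hp 1 = X := by
  rw [Hp_succ, Hp_zero]; simp

lemma Hp_deriv (n : ℕ) :
    Polynomial.derivative (Hp (n + 1)) = Polynomial.C ((n : ℝ) + 1) * Hp n := by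
  induction n with
  | zero => rw [Hp_one, Hp_zero]; simp
  | succ n ih =>
      rw [Hp_succ (n + 1)]
      rw [Polynomial.derivative_sub, Polynomial.derivative_mul, Polynomial.derivative_X,
        ih, Polynomial.derivative_mul, Polynomial.derivative_C, Hp_succ n]
      push_cast
      have hC : (Polynomial.C ((n : ℝ) + 1 + 1)) = Polynomial.C ((n : ℝ) + 1) + Polynomial.C 1 := by
        rw [← map_add]
      rw [hC, Polynomial.C_1]
      ring

lemma aux_aeval_eq (n : ℕ) (x : ℝ) :
    (Polynomial.aeval x (Polynomial.hermite n) : ℝ) = (Hp n).eval x := by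
  rw [Hp, Polynomial.eval_map, Polynomial.aeval_def, algebraMap_int_eq]

lemma aux_key {s : ℝ} (hs0 : 0 < s) (hs1 : s < 1) (m : ℝ) : ∀ n : ℕ,
    ∫ v : ℝ, (Hp n).eval v * heatK s (v - m)
      = Real.sqrt (1 - s) ^ n * (Hp n).eval (m / Real.sqrt (1 - s)) := by
  set c : ℝ := Real.sqrt (1 - s) with hcdef
  have hc : 0 < c := Real.sqrt_pos.mpr (by linarith)
  have hc2 : c ^ 2 = 1 - s := Real.sq_sqrt (by linarith)
  have hc0 : c ≠ 0 := ne_of_gt hc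
  -- J of 1
  have hJ1 : ∫ v : ℝ, (1 : Polynomial ℝ).eval v * heatK s (v - m) = 1 := by
    simpa using aux_integral_heatK hs0 m
  -- recurrence for J(X * Q)
  have hJX : ∀ Q : Polynomial ℝ, ∫ v : ℝ, (X * Q).eval v * heatK s (v - m)
      = s * (∫ v : ℝ, (Polynomial.derivative Q).eval v * heatK s (v - m))
        + m * ∫ v : ℝ, Q.eval v * heatK s (v - m) := by
    intro Q
    have hdecomp : X * Q = (X - C m) * Q + Polynomial.C m * Q := by ring
    rw [hdecomp, aux_J_add _ _ hs0 m, aux_J_ibp Q hs0 m, aux_J_Cmul m Q hs0 m]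
  -- main two-step induction
  have main : ∀ n : ℕ,
      (∫ v : ℝ, (Hp n).eval v * heatK s (v - m) = c ^ n * (Hp n).eval (m / c)) ∧
      (∫ v : ℝ, (Hp (n + 1)).eval v * heatK s (v - m)
        = c ^ (n + 1) * (Hp (n + 1)).eval (m / c)) := by
    intro n
    induction n with
    | zero =>
        constructor
        · rw [Hp_zero]; simpa using hJ1
        · rw [Hp_one]
          have h := hJX 1
          rw [Polynomial.derivative_one, show (X * 1 : Polynomial ℝ) = X from by ring] at h
          rw [h, hJ1]
          have h0 : ∫ v : ℝ, (0 : Polynomial ℝ).eval v * heatK s (v - m) = 0 := by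
            simp
          rw [h0, pow_one, Polynomial.eval_X]
          field_simp
          ring
    | succ n ih =>
        refine ⟨ih.2, ?_⟩
        rw [Hp_succ (n + 1), aux_J_sub _ _ hs0 m, hJX (Hp (n + 1)), Hp_deriv n,
          aux_J_Cmul _ _ hs0 m, ih.1, ih.2]
        simp only [Polynomial.eval_sub, Polynomial.eval_mul, Polynomial.eval_X,
          Polynomial.eval_C]
        have hpow : c ^ (n + 1 + 1) * (m / c * (Hp (n + 1)).eval (m / c)
              - ((n : ℝ) + 1) * (Hp n).eval (m / c))
            = m * c ^ (n + 1) * (Hp (n + 1)).eval (m / c)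
              - ((n : ℝ) + 1) * ((1 - s) * c ^ n) * (Hp n).eval (m / c) := by
          rw [← hc2]
          field_simp
          ring
        rw [hpow]
        ring
  exact fun n => (main n).1

lemma aux_factor (ε σ u v : ℝ) (hε : 0 < ε) (hσ : 0 < σ) :
    heatK ε (σ * v - u) * heatK 1 v
      = heatK (σ ^ 2 + ε) u * heatK (ε / (σ ^ 2 + ε)) (v - σ * u / (σ ^ 2 + ε)) := by
  have ht : (0:ℝ) < σ ^ 2 + ε := by positivity
  unfold heatK
  rw [mul_mul_mul_comm, mul_mul_mul_comm ((Real.sqrt (2 * Real.pi * (σ ^ 2 + ε)))⁻¹)]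
  congr 1
  · rw [← mul_inv, ← mul_inv, ← Real.sqrt_mul (by positivity), ← Real.sqrt_mul (by positivity)]
    congr 2
    field_simp
  · rw [← Real.exp_add, ← Real.exp_add]
    congr 1
    field_simp
    ring


/-- `∫ p_ε(σv - u) H_n(v) p_1(v) dv = (σ/√(σ²+ε))^n H_n(u/√(σ²+ε)) p_{σ²+ε}(u)`,
where `H_n` is the probabilists' Hermite polynomial. -/
theorem stmt7 (n : ℕ) (ε σ u : ℝ) (hε : 0 < ε) (hσ : 0 < σ) :
    ∫ v : ℝ, heatK ε (σ * v - u) * Polynomial.aeval v (Polynomial.hermite n) * heatK 1 v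
      = (σ / Real.sqrt (σ ^ 2 + ε)) ^ n *
          Polynomial.aeval (u / Real.sqrt (σ ^ 2 + ε)) (Polynomial.hermite n) *
          heatK (σ ^ 2 + ε) u := by
  have ht : (0:ℝ) < σ ^ 2 + ε := by positivity
  have hs0 : 0 < ε / (σ ^ 2 + ε) := by positivity
  have hs1 : ε / (σ ^ 2 + ε) < 1 := by
    rw [div_lt_one ht]; nlinarith
  have h1s : 1 - ε / (σ ^ 2 + ε) = σ ^ 2 / (σ ^ 2 + ε) := by
    field_simp
    ring
  have hsq : Real.sqrt (1 - ε / (σ ^ 2 + ε)) = σ / Real.sqrt (σ ^ 2 + ε) := by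
    rw [h1s, Real.sqrt_div (sq_nonneg σ), Real.sqrt_sq hσ.le]
  have hsqt : Real.sqrt (σ ^ 2 + ε) * Real.sqrt (σ ^ 2 + ε) = σ ^ 2 + ε :=
    Real.mul_self_sqrt ht.le
  have hsqt0 : Real.sqrt (σ ^ 2 + ε) ≠ 0 := by positivity
  have hmc : σ * u / (σ ^ 2 + ε) / (σ / Real.sqrt (σ ^ 2 + ε)) = u / Real.sqrt (σ ^ 2 + ε) := by
    field_simp
    linear_combination u * hsqt
  calc ∫ v : ℝ, heatK ε (σ * v - u) * Polynomial.aeval v (Polynomial.hermite n) * heatK 1 v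
      = ∫ v : ℝ, heatK (σ ^ 2 + ε) u *
          ((Hp n).eval v * heatK (ε / (σ ^ 2 + ε)) (v - σ * u / (σ ^ 2 + ε))) := by
        congr 1
        funext v
        rw [aux_aeval_eq]
        linear_combination ((Hp n).eval v) * aux_factor ε σ u v hε hσ
    _ = heatK (σ ^ 2 + ε) u * ∫ v : ℝ,
          (Hp n).eval v * heatK (ε / (σ ^ 2 + ε)) (v - σ * u / (σ ^ 2 + ε)) :=
        integral_const_mul _ _
    _ = heatK (σ ^ 2 + ε) u * (Real.sqrt (1 - ε / (σ ^ 2 + ε)) ^ n *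
          (Hp n).eval (σ * u / (σ ^ 2 + ε) / Real.sqrt (1 - ε / (σ ^ 2 + ε)))) := by
        rw [aux_key hs0 hs1 (σ * u / (σ ^ 2 + ε)) n]
    _ = (σ / Real.sqrt (σ ^ 2 + ε)) ^ n *
          Polynomial.aeval (u / Real.sqrt (σ ^ 2 + ε)) (Polynomial.hermite n) *
          heatK (σ ^ 2 + ε) u := by
        rw [hsq, hmc, aux_aeval_eq]
        ring
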